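/- If x̃ is an optimal solution of the linear program max ⟨c,x⟩ subject to Ax ≤ b, x ≥ 0, and x̃_τ is the unique optimal solution of the same program with the added constraint ‖x‖₂ ≤ τ, then for every τ with 0 ≤ τ ≤ ‖x̃‖₂ one has ‖x̃_τ‖₂ = τ. -/

import Mathlib

open scoped RealInnerProductSpace

/-- If `x̃` is an optimal solution of `max ⟪c,x⟫ s.t. Ax ≤ b, x ≥ 0` (feasible set nonempty,
bounded, containing 0), and for each `τ ≥ 0` the problem with added constraint `‖x‖₂ ≤ τ`
has `x̃_τ` as its unique optimal solution, then `‖x̃_τ‖₂ = τ` whenever `0 ≤ τ ≤ ‖x̃‖₂`. -/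
theorem norm_of_constrained_optimizer
    {m n : ℕ} (A : Matrix (Fin m) (Fin n) ℝ) (b : Fin m → ℝ)
    (c : EuclideanSpace ℝ (Fin n))
    (hzero : A.mulVec (0 : EuclideanSpace ℝ (Fin n)) ≤ b)
    (hbdd : Bornology.IsBounded
      {x : EuclideanSpace ℝ (Fin n) | A.mulVec x ≤ b ∧ ∀ i, 0 ≤ x i})
    (xt : EuclideanSpace ℝ (Fin n))
    (hxt_feas : A.mulVec xt ≤ b ∧ ∀ i, 0 ≤ xt i)
    (hxt_opt : ∀ x : EuclideanSpace ℝ (Fin n),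
      A.mulVec x ≤ b → (∀ i, 0 ≤ x i) → ⟪c, x⟫ ≤ ⟪c, xt⟫)
    (xτ : ℝ → EuclideanSpace ℝ (Fin n))
    (hxτ_feas : ∀ τ, 0 ≤ τ →
      A.mulVec (xτ τ) ≤ b ∧ (∀ i, 0 ≤ xτ τ i) ∧ ‖xτ τ‖ ≤ τ)
    (hxτ_opt : ∀ τ, 0 ≤ τ → ∀ x : EuclideanSpace ℝ (Fin n),
      A.mulVec x ≤ b → (∀ i, 0 ≤ x i) → ‖x‖ ≤ τ → ⟪c, x⟫ ≤ ⟪c, xτ τ⟫)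
    (hxτ_uniq : ∀ τ, 0 ≤ τ → ∀ x : EuclideanSpace ℝ (Fin n),
      A.mulVec x ≤ b → (∀ i, 0 ≤ x i) → ‖x‖ ≤ τ → ⟪c, x⟫ = ⟪c, xτ τ⟫ → x = xτ τ) :
    ∀ τ, 0 ≤ τ → τ ≤ ‖xt‖ → ‖xτ τ‖ = τ := by

  intro τ hτ hττ
  obtain ⟨hA, hpos, hnorm⟩ := hxτ_feas τ hτ
  by_contra hne
  have hlt : ‖xτ τ‖ < τ := lt_of_le_of_ne hnorm hne
  set s := ‖xτ τ‖ with hs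
  have hden : (0:ℝ) < ‖xt‖ - s + 1 := by nlinarith
  set t := (τ - s) / (‖xt‖ - s + 1) with ht
  have ht0 : 0 < t := div_pos (by linarith) hden
  have ht1 : t ≤ 1 := by
    rw [ht, div_le_one hden]; linarith
  have htprod : t * (‖xt‖ - s + 1) = τ - s := by
    rw [ht]; field_simp
  set y := (1 - t) • xτ τ + t • xt with hy
  have hynorm : ‖y‖ ≤ τ := by
    calc ‖y‖ ≤ (1-t)*s + t*‖xt‖ := by
          refine le_trans (norm_add_le _ _) ?_
          rw [norm_smul, norm_smul, Real.norm_eq_abs, Real.norm_eq_abs,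
            abs_of_nonneg (by linarith), abs_of_nonneg ht0.le]
      _ ≤ τ := by nlinarith
  have hyA : A.mulVec y ≤ b := by
    intro i
    have h1 := hA i
    have h2 := hxt_feas.1 i
    have hyi : A.mulVec y i = (1-t) * A.mulVec (xτ τ) i + t * A.mulVec xt i := by
      rw [hy]
      have h3 : A.mulVec ((1 - t) • xτ τ + t • xt) =
          (1-t) • A.mulVec (xτ τ) + t • A.mulVec xt := by
        rw [Matrix.mulVec_add, Matrix.mulVec_smul, Matrix.mulVec_smul]
      rw [WithLp.ofLp_add, WithLp.ofLp_smul, WithLp.ofLp_smul, h3]; simp [smul_eq_mul]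
    rw [hyi]
    nlinarith
  have hypos : ∀ i, 0 ≤ y i := by
    intro i
    have h1 := hpos i
    have h2 := hxt_feas.2 i
    have : y i = (1-t) * xτ τ i + t * xt i := by
      rw [hy]; simp [smul_eq_mul]
    rw [this]
    nlinarith
  have hle : ⟪c, xτ τ⟫ ≤ ⟪c, xt⟫ := hxt_opt _ hA hpos
  have hge : ⟪c, y⟫ ≤ ⟪c, xτ τ⟫ := hxτ_opt τ hτ y hyA hypos hynorm
  have hyinner : ⟪c, y⟫ = (1-t) * ⟪c, xτ τ⟫ + t * ⟪c, xt⟫ := by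
    rw [hy, inner_add_right, real_inner_smul_right, real_inner_smul_right]
  have heq : ⟪c, y⟫ = ⟪c, xτ τ⟫ := by
    refine le_antisymm hge ?_
    rw [hyinner]; nlinarith
  have hyeq : y = xτ τ := hxτ_uniq τ hτ y hyA hypos hynorm heq
  have hxteq : xt = xτ τ := by
    ext i
    have h := congrArg (fun v : EuclideanSpace ℝ (Fin n) => v i) hyeq
    rw [hy] at h
    simp only [PiLp.add_apply, PiLp.smul_apply, smul_eq_mul] at h
    nlinarith
  rw [hxteq] at hττ
  linarith
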